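/- Let p be a prime, f ≥ 2, q = p^f, 𝔽_q a finite field with q elements, K a field, and ι : 𝔽_q →+* K a ring homomorphism. Fix r : Fin f → ℕ with 0 ≤ r_j ≤ p−1 for all j, and fix an index j₀ with r_{j₀} ≤ p−2. Then the function 𝔽_q → K given by λ ↦ ι(λ)^{p^{j₀}(r_{j₀}+1)} does NOT lie in the K-linear span of the functions λ ↦ ι(λ)^{∑_{j=0}^{f−1} p^j i_j} taken over all i : Fin f → ℕ with 0 ≤ i_j ≤ r_j for all j. Equivalently, for any choice of scalars u_{i⃗} ∈ K (0 ≤ i⃗ ≤ r⃗) there exists λ ∈ 𝔽_q with ι(λ)^{p^{j₀}(r_{j₀}+1)} ≠ ∑_{0 ≤ i⃗ ≤ r⃗} u_{i⃗} · ι(λ)^{∑_j p^j i_j}. -/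

import Mathlib

open Finset Polynomial

lemma geom_nat (p : ℕ) (hp : 1 ≤ p) : ∀ m : ℕ, ∑ j ∈ Finset.range m, p ^ j * (p - 1) = p ^ m - 1 := by
  intro m
  induction m with
  | zero => simp
  | succ n ih =>
    rw [Finset.sum_range_succ, ih, pow_succ]
    have h1 : 1 ≤ p ^ n := Nat.one_le_pow _ _ hp
    obtain ⟨q, rfl⟩ : ∃ q, p = q + 1 := ⟨p - 1, by omega⟩
    have h2 : (q + 1) ^ n * (q + 1) = (q + 1) ^ n * (q + 1 - 1) + (q + 1) ^ n := by
      simp [Nat.mul_add]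
    omega

lemma digit_aux (p : ℕ) (hp : 1 < p) {f : ℕ} (a : Fin f → ℕ) (ha : ∀ j, a j < p) (k : Fin f) :
    (∑ j : Fin f, p ^ (j : ℕ) * a j) / p ^ (k : ℕ) % p = a k := by
  classical
  set b : ℕ → ℕ := fun j => if h : j < f then a ⟨j, h⟩ else 0 with hb
  have hbk : ∀ j : Fin f, b (j : ℕ) = a j := fun j => by simp [hb, j.isLt]
  have hsum : (∑ j : Fin f, p ^ (j : ℕ) * a j) = ∑ j ∈ Finset.range f, p ^ j * b j := by
    rw [← Fin.sum_univ_eq_sum_range]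
    exact Finset.sum_congr rfl fun j _ => by rw [hbk]
  have hkf : (k : ℕ) < f := k.isLt
  -- split the range sum
  have hsplit : ∑ j ∈ Finset.range f, p ^ j * b j =
      (∑ j ∈ Finset.range (k : ℕ), p ^ j * b j) + ∑ j ∈ Finset.Ico (k : ℕ) f, p ^ j * b j := by
    rw [Finset.range_eq_Ico, ← Finset.sum_Ico_consecutive _ (Nat.zero_le _) hkf.le,
      ← Finset.range_eq_Ico]
  have hbot : ∑ j ∈ Finset.Ico (k : ℕ) f, p ^ j * b j =
      p ^ (k : ℕ) * b (k : ℕ) + ∑ j ∈ Finset.Ico ((k : ℕ) + 1) f, p ^ j * b j :=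
    Finset.sum_eq_sum_Ico_succ_bot hkf _
  -- high part is divisible by p^(k+1)
  have hhigh : ∑ j ∈ Finset.Ico ((k : ℕ) + 1) f, p ^ j * b j =
      p ^ ((k : ℕ) + 1) * ∑ j ∈ Finset.Ico ((k : ℕ) + 1) f, p ^ (j - ((k : ℕ) + 1)) * b j := by
    rw [Finset.mul_sum]
    refine Finset.sum_congr rfl fun j hj => ?_
    have hj' : (k : ℕ) + 1 ≤ j := (Finset.mem_Ico.mp hj).1
    rw [← mul_assoc, ← pow_add]
    congr 2
    omega
  set L := ∑ j ∈ Finset.range (k : ℕ), p ^ j * b j with hL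
  set M := ∑ j ∈ Finset.Ico ((k : ℕ) + 1) f, p ^ (j - ((k : ℕ) + 1)) * b j with hM
  have hLlt : L < p ^ (k : ℕ) := by
    have : L ≤ ∑ j ∈ Finset.range (k : ℕ), p ^ j * (p - 1) := by
      refine Finset.sum_le_sum fun j hj => Nat.mul_le_mul_left _ ?_
      by_cases h : j < f
      · simp only [hb, dif_pos h]
        have := ha ⟨j, h⟩
        omega
      · simp [hb, dif_neg h]
    rw [geom_nat p hp.le] at this
    have : 1 ≤ p ^ (k : ℕ) := Nat.one_le_pow _ _ (by omega)
    omega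
  have htotal : (∑ j : Fin f, p ^ (j : ℕ) * a j) =
      L + p ^ (k : ℕ) * (b (k : ℕ) + p * M) := by
    rw [hsum, hsplit, hbot, hhigh, Nat.mul_add]
    congr 1
    rw [pow_succ]
    ring
  rw [htotal, Nat.add_mul_div_left _ _ (Nat.pow_pos (by omega)),
    Nat.div_eq_of_lt hLlt, Nat.zero_add, Nat.add_mul_mod_self_left,
    hbk k, Nat.mod_eq_of_lt (ha k)]

/-- Let `p` be a prime, `f ≥ 2`, `𝔽_q` a finite field with `q = p^f` elements, `K` a field
and `ι : 𝔽_q →+* K` a ring homomorphism. Fix `r : Fin f → ℕ` with `r j ≤ p - 1` and an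
index `j₀` with `r j₀ ≤ p - 2`. Then for any scalars `u i⃗ ∈ K` (indexed by the tuples
`0 ≤ i⃗ ≤ r⃗`) there is `λ ∈ 𝔽_q` with
`ι(λ)^{p^{j₀}(r_{j₀}+1)} ≠ ∑_{i⃗} u_{i⃗} ι(λ)^{∑_j p^j i_j}`;
i.e. `λ ↦ ι(λ)^{p^{j₀}(r_{j₀}+1)}` is not in the span of the `λ ↦ ι(λ)^{∑_j p^j i_j}`. -/
theorem pow_not_in_span (p f : ℕ) (hp : p.Prime) (hf : 2 ≤ f)
    (Fq : Type*) [Field Fq] [Fintype Fq] (hcard : Fintype.card Fq = p ^ f)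
    (K : Type*) [Field K] (ι : Fq →+* K)
    (r : Fin f → ℕ) (hr : ∀ j, r j ≤ p - 1)
    (j₀ : Fin f) (hj₀ : r j₀ ≤ p - 2)
    (u : (∀ j : Fin f, Fin (r j + 1)) → K) :
    ∃ lam : Fq, ι lam ^ (p ^ (j₀ : ℕ) * (r j₀ + 1)) ≠
      ∑ i : (∀ j : Fin f, Fin (r j + 1)),
        u i * ι lam ^ (∑ j : Fin f, p ^ (j : ℕ) * (i j : ℕ)) := by
  classical
  by_contra hcon
  push_neg at hcon
  have hp1 : 1 < p := hp.one_lt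
  set e : ℕ := p ^ (j₀ : ℕ) * (r j₀ + 1) with he
  set E : (∀ j : Fin f, Fin (r j + 1)) → ℕ := fun i => ∑ j : Fin f, p ^ (j : ℕ) * (i j : ℕ)
    with hE
  -- each E i differs from e
  have hEne : ∀ i, E i ≠ e := by
    intro i heq
    have hia : ∀ j : Fin f, ((i j : ℕ)) < p := fun j => by
      have h1 := (i j).isLt
      have h2 := hr j
      omega
    have h1 : E i / p ^ (j₀ : ℕ) % p = (i j₀ : ℕ) :=
      digit_aux p hp1 (fun j => (i j : ℕ)) hia j₀
    have h2 : e / p ^ (j₀ : ℕ) % p = r j₀ + 1 := by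
      rw [he, Nat.mul_div_cancel_left _ (Nat.pow_pos (by omega))]
      exact Nat.mod_eq_of_lt (by omega)
    have h3 := (i j₀).isLt
    rw [heq, h2] at h1
    omega
  -- bounds on exponents
  have geom := geom_nat p (by omega : 1 ≤ p) f
  have hElt : ∀ i, E i < p ^ f := by
    intro i
    have h1 : E i ≤ ∑ j : Fin f, p ^ (j : ℕ) * (p - 1) := by
      refine Finset.sum_le_sum fun j _ => Nat.mul_le_mul_left _ ?_
      have h1 := (i j).isLt
      have h2 := hr j
      omega
    rw [Fin.sum_univ_eq_sum_range (fun j => p ^ j * (p - 1)) f, geom] at h1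
    have : 1 ≤ p ^ f := Nat.one_le_pow _ _ (by omega)
    omega
  have helt : e < p ^ f := by
    have h1 : e < p ^ ((j₀ : ℕ) + 1) := by
      rw [he, pow_succ]
      exact (Nat.mul_lt_mul_left (Nat.pow_pos (by omega))).mpr (by omega)
    exact h1.trans_le (Nat.pow_le_pow_right (by omega) j₀.isLt)
  -- the polynomial
  set P : K[X] := X ^ e - ∑ i : (∀ j : Fin f, Fin (r j + 1)), C (u i) * X ^ (E i) with hP
  have hPeval : ∀ lam : Fq, P.eval (ι lam) = 0 := by
    intro lam
    simp only [hP, eval_sub, eval_pow, eval_X, eval_finset_sum, eval_mul, eval_C]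
    rw [hcon lam]
    exact sub_self _
  have hP0 : P ≠ 0 := by
    have hc : P.coeff e = 1 := by
      simp only [hP, coeff_sub, coeff_X_pow, if_pos rfl, finset_sum_coeff, coeff_C_mul]
      rw [Finset.sum_eq_zero fun i _ => by
        rw [if_neg (Ne.symm (hEne i)), mul_zero]]
      simp
    intro h
    rw [h, coeff_zero] at hc
    exact one_ne_zero hc.symm
  have hdeg : P.natDegree < p ^ f := by
    refine lt_of_le_of_lt (natDegree_sub_le _ _) ?_
    rw [natDegree_X_pow]
    refine max_lt helt (lt_of_le_of_lt
      (natDegree_sum_le_of_forall_le _ _ fun i _ => ?_) (show p ^ f - 1 < p ^ f by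
        have : 1 ≤ p ^ f := Nat.one_le_pow _ _ (by omega); omega))
    refine le_trans (natDegree_C_mul_le _ _) ?_
    rw [natDegree_X_pow]
    have := hElt i
    omega
  -- too many roots
  have hsub : Finset.univ.image ι ⊆ P.roots.toFinset := by
    intro x hx
    rw [Finset.mem_image] at hx
    obtain ⟨lam, -, rfl⟩ := hx
    rw [Multiset.mem_toFinset, mem_roots hP0]
    exact hPeval lam
  have hcards : p ^ f ≤ P.natDegree := by
    calc p ^ f = (Finset.univ.image ι).card := by
          rw [Finset.card_image_of_injective _ ι.injective, Finset.card_univ, hcard]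
      _ ≤ P.roots.toFinset.card := Finset.card_le_card hsub
      _ ≤ Multiset.card P.roots := P.roots.toFinset_card_le
      _ ≤ P.natDegree := P.card_roots'
  omega
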